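/- Let K and L be compact convex bodies in ℝⁿ that are symmetric with respect to the origin (K = −K and L = −L). Then for every z ∈ ℝⁿ, vol(K ∩ (z + L)) ≤ vol(K ∩ L); equivalently, sup_{z∈ℝⁿ} |K ∩ (z + L)| = |K ∩ L|. -/

import Mathlib

open MeasureTheory Set
open scoped Pointwise

namespace BM15
variable {n : ℕ}

/-! ### Boxes -/

def Box (a b : Fin n → ℝ) : Set (Fin n → ℝ) := Set.pi Set.univ fun i => Ico (a i) (b i)

lemma mem_box {a b x : Fin n → ℝ} : x ∈ Box a b ↔ ∀ i, a i ≤ x i ∧ x i < b i := by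
  simp [Box, Set.mem_pi, Set.mem_Ico]

lemma box_measurable (a b : Fin n → ℝ) : MeasurableSet (Box a b) :=
  MeasurableSet.univ_pi fun _ => measurableSet_Ico

lemma volume_box (a b : Fin n → ℝ) :
    volume (Box a b) = ∏ i, ENNReal.ofReal (b i - a i) := by
  rw [Box, volume_pi_pi]
  simp [Real.volume_Ico]

lemma Ico_add_Ico' {a b c d : ℝ} (h1 : a < b) (h2 : c < d) :
    Ico a b + Ico c d = Ico (a + c) (b + d) := by
  apply Subset.antisymm
  · rintro t ⟨u, hu, v, hv, rfl⟩
    exact ⟨add_le_add hu.1 hv.1, add_lt_add hu.2 hv.2⟩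
  · rintro t ⟨h3, h4⟩
    by_cases h5 : t - c < b
    · exact ⟨t - c, ⟨by linarith, h5⟩, c, ⟨le_refl _, h2⟩, by ring⟩
    · push_neg at h5
      refine ⟨(max a (t - d) + b) / 2, ⟨?_, ?_⟩, t - (max a (t - d) + b) / 2, ⟨?_, ?_⟩, by ring⟩
      · have := le_max_left a (t - d); linarith
      · have h6 : max a (t - d) < b := max_lt h1 (by linarith)
        linarith
      · have h6 : max a (t - d) < b := max_lt h1 (by linarith)
        linarith
      · have := le_max_right a (t - d); linarith

lemma box_add_box {a b c d : Fin n → ℝ} (h1 : ∀ i, a i < b i) (h2 : ∀ i, c i < d i) :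
    Box a b + Box c d = Box (a + c) (b + d) := by
  apply Subset.antisymm
  · rintro t ⟨u, hu, v, hv, rfl⟩
    rw [mem_box] at hu hv ⊢
    intro i
    exact ⟨add_le_add (hu i).1 (hv i).1, add_lt_add (hu i).2 (hv i).2⟩
  · intro t ht
    rw [mem_box] at ht
    have : ∀ i, ∃ u, (a i ≤ u ∧ u < b i) ∧ (c i ≤ t i - u ∧ t i - u < d i) := by
      intro i
      have : t i ∈ Ico (a i + c i) (b i + d i) := ⟨(ht i).1, (ht i).2⟩
      rw [← Ico_add_Ico' (h1 i) (h2 i)] at this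
      obtain ⟨u, hu, v, hv, huv⟩ := this
      exact ⟨u, ⟨hu.1, hu.2⟩, by rw [← huv]; simpa using hv⟩
    choose u hu using this
    exact ⟨u, mem_box.2 fun i => (hu i).1, t - u, mem_box.2 fun i => (hu i).2, by ring⟩

/-! ### AM-GM -/

lemma amgm_boxes (hn : n ≠ 0) {x y : Fin n → ℝ} (hx : ∀ i, 0 < x i) (hy : ∀ i, 0 < y i) :
    (∏ i, x i) ^ ((n : ℝ)⁻¹) + (∏ i, y i) ^ ((n : ℝ)⁻¹)
      ≤ (∏ i, (x i + y i)) ^ ((n : ℝ)⁻¹) := by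
  set α : ℝ := (n : ℝ)⁻¹ with hα
  have hs : ∀ i, 0 < x i + y i := fun i => add_pos (hx i) (hy i)
  have hnpos : (0 : ℝ) < n := by positivity
  have key : ∀ z : Fin n → ℝ, (∀ i, 0 ≤ z i) →
      (∏ i, z i) ^ α ≤ (n : ℝ)⁻¹ * ∑ i, z i := by
    intro z hz
    have h := Real.geom_mean_le_arith_mean_weighted Finset.univ (fun _ => (n : ℝ)⁻¹) z
      (fun i _ => by positivity) (by simp [Finset.card_univ]; field_simp)
      (fun i _ => hz i)
    calc (∏ i, z i) ^ α = ∏ i, z i ^ α := by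
          rw [← Real.finset_prod_rpow _ _ (fun i _ => hz i)]
        _ ≤ ∑ i, (n:ℝ)⁻¹ * z i := h
        _ = (n:ℝ)⁻¹ * ∑ i, z i := by rw [Finset.mul_sum]
  have h1 := key (fun i => x i / (x i + y i)) (fun i => div_nonneg (hx i).le (hs i).le)
  have h2 := key (fun i => y i / (x i + y i)) (fun i => div_nonneg (hy i).le (hs i).le)
  have hsum : (∑ i, x i / (x i + y i)) + (∑ i, y i / (x i + y i)) = n := by
    rw [← Finset.sum_add_distrib]
    have : ∀ i ∈ Finset.univ, x i / (x i + y i) + y i / (x i + y i) = 1 := by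
      intro i _; field_simp [(hs i).ne']
    rw [Finset.sum_congr rfl this]; simp
  have hmain : (∏ i, x i / (x i + y i)) ^ α + (∏ i, y i / (x i + y i)) ^ α ≤ 1 := by
    have := add_le_add h1 h2
    rw [← mul_add, hsum] at this
    simpa [ne_of_gt hnpos] using this
  have hprod : ∀ z : Fin n → ℝ,
      (∏ i, z i / (x i + y i)) = (∏ i, z i) / (∏ i, (x i + y i)) := by
    intro z; rw [Finset.prod_div_distrib]
  rw [hprod x, hprod y] at hmain
  have hP : 0 < ∏ i, (x i + y i) := Finset.prod_pos fun i _ => hs i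
  have hPx : 0 ≤ ∏ i, x i := Finset.prod_nonneg fun i _ => (hx i).le
  have hPy : 0 ≤ ∏ i, y i := Finset.prod_nonneg fun i _ => (hy i).le
  rw [Real.div_rpow hPx hP.le, Real.div_rpow hPy hP.le, ← add_div,
    div_le_one (by positivity)] at hmain
  exact hmain

/-! ### Families of boxes -/

abbrev BoxP (n : ℕ) := (Fin n → ℝ) × (Fin n → ℝ)

def U (F : Finset (BoxP n)) : Set (Fin n → ℝ) := ⋃ p ∈ F, Box p.1 p.2

def Good (F : Finset (BoxP n)) : Prop :=
  (∀ p ∈ F, ∀ i, p.1 i < p.2 i) ∧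
  ((F : Set (BoxP n)).Pairwise fun p q => Disjoint (Box p.1 p.2) (Box q.1 q.2))

lemma measurableSet_U (F : Finset (BoxP n)) : MeasurableSet (U F) :=
  F.measurableSet_biUnion fun p _ => box_measurable p.1 p.2

lemma volume_U (F : Finset (BoxP n)) (hF : Good F) :
    volume (U F) = ∑ p ∈ F, volume (Box p.1 p.2) :=
  measure_biUnion_finset hF.2 fun p _ => box_measurable p.1 p.2

lemma volume_U_lt_top (F : Finset (BoxP n)) : volume (U F) < ⊤ := by
  refine lt_of_le_of_lt (measure_biUnion_finset_le F _) ?_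
  refine ENNReal.sum_lt_top.2 fun p _ => ?_
  rw [volume_box]
  exact ENNReal.prod_lt_top fun i _ => ENNReal.ofReal_lt_top

lemma volume_U_pos (F : Finset (BoxP n)) (hF : Good F) (hne : F.Nonempty) :
    0 < volume (U F) := by
  obtain ⟨p, hp⟩ := hne
  rw [volume_U F hF]
  have hpos : 0 < volume (Box p.1 p.2) := by
    rw [volume_box]
    refine CanonicallyOrderedAdd.prod_pos.2 fun i _ => ?_
    exact ENNReal.ofReal_pos.2 (by linarith [hF.1 p hp i])
  exact lt_of_lt_of_le hpos
    (Finset.single_le_sum (f := fun q : BoxP n => volume (Box q.1 q.2)) (fun q _ => zero_le) hp)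

/-! ### Halfspace intersections of boxes -/

lemma box_inter_halfLt (a b : Fin n → ℝ) (i : Fin n) (c : ℝ) :
    Box a b ∩ {x | x i < c} = Box a (Function.update b i (min (b i) c)) := by
  ext x
  simp only [mem_inter_iff, mem_box, mem_setOf_eq]
  constructor
  · rintro ⟨h1, h2⟩ j
    rcases eq_or_ne j i with rfl | hj
    · rw [Function.update_self]
      exact ⟨(h1 j).1, lt_min (h1 j).2 h2⟩
    · rw [Function.update_of_ne hj]
      exact h1 j
  · intro h
    refine ⟨fun j => ?_, ?_⟩
    · rcases eq_or_ne j i with rfl | hj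
      · have := h j; rw [Function.update_self] at this
        exact ⟨this.1, lt_of_lt_of_le this.2 (min_le_left _ _)⟩
      · have := h j; rwa [Function.update_of_ne hj] at this
    · have := h i; rw [Function.update_self] at this
      exact lt_of_lt_of_le this.2 (min_le_right _ _)

lemma box_inter_halfGe (a b : Fin n → ℝ) (i : Fin n) (c : ℝ) :
    Box a b ∩ {x | c ≤ x i} = Box (Function.update a i (max (a i) c)) b := by
  ext x
  simp only [mem_inter_iff, mem_box, mem_setOf_eq]
  constructor
  · rintro ⟨h1, h2⟩ j
    rcases eq_or_ne j i with rfl | hj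
    · rw [Function.update_self]
      exact ⟨max_le (h1 j).1 h2, (h1 j).2⟩
    · rw [Function.update_of_ne hj]
      exact h1 j
  · intro h
    refine ⟨fun j => ?_, ?_⟩
    · rcases eq_or_ne j i with rfl | hj
      · have := h j; rw [Function.update_self] at this
        exact ⟨le_trans (le_max_left _ _) this.1, this.2⟩
      · have := h j; rwa [Function.update_of_ne hj] at this
    · have := h i; rw [Function.update_self] at this
      exact le_trans (le_max_right _ _) this.1

/-! ### Splitting families by a hyperplane -/

noncomputable def lowF (i : Fin n) (c : ℝ) (F : Finset (BoxP n)) : Finset (BoxP n) :=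
  (F.filter fun p => p.1 i < c).image fun p => (p.1, Function.update p.2 i (min (p.2 i) c))

noncomputable def highF (i : Fin n) (c : ℝ) (F : Finset (BoxP n)) : Finset (BoxP n) :=
  (F.filter fun p => c < p.2 i).image fun p => (Function.update p.1 i (max (p.1 i) c), p.2)

lemma U_lowF (i : Fin n) (c : ℝ) (F : Finset (BoxP n)) :
    U (lowF i c F) = U F ∩ {x | x i < c} := by
  ext x
  simp only [U, lowF, mem_iUnion, Finset.mem_image, Finset.mem_filter, mem_inter_iff,
    mem_setOf_eq, exists_prop]
  constructor
  · rintro ⟨q, ⟨p, ⟨hpF, hpc⟩, rfl⟩, hx⟩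
    rw [← box_inter_halfLt] at hx
    exact ⟨⟨p, hpF, hx.1⟩, hx.2⟩
  · rintro ⟨⟨p, hpF, hx⟩, hxc⟩
    refine ⟨(p.1, Function.update p.2 i (min (p.2 i) c)), ⟨p, ⟨hpF, ?_⟩, rfl⟩, ?_⟩
    · exact lt_of_le_of_lt (mem_box.1 hx i).1 hxc
    · rw [← box_inter_halfLt]
      exact ⟨hx, hxc⟩

lemma U_highF (i : Fin n) (c : ℝ) (F : Finset (BoxP n)) :
    U (highF i c F) = U F ∩ {x | c ≤ x i} := by
  ext x
  simp only [U, highF, mem_iUnion, Finset.mem_image, Finset.mem_filter, mem_inter_iff,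
    mem_setOf_eq, exists_prop]
  constructor
  · rintro ⟨q, ⟨p, ⟨hpF, hpc⟩, rfl⟩, hx⟩
    rw [← box_inter_halfGe] at hx
    exact ⟨⟨p, hpF, hx.1⟩, hx.2⟩
  · rintro ⟨⟨p, hpF, hx⟩, hxc⟩
    refine ⟨(Function.update p.1 i (max (p.1 i) c), p.2), ⟨p, ⟨hpF, ?_⟩, rfl⟩, ?_⟩
    · exact lt_of_le_of_lt hxc (mem_box.1 hx i).2
    · rw [← box_inter_halfGe]
      exact ⟨hx, hxc⟩

lemma good_lowF (i : Fin n) (c : ℝ) {F : Finset (BoxP n)} (hF : Good F) :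
    Good (lowF i c F) := by
  constructor
  · rintro q hq j
    simp only [lowF, Finset.mem_image, Finset.mem_filter] at hq
    obtain ⟨p, ⟨hpF, hpc⟩, rfl⟩ := hq
    dsimp only
    rcases eq_or_ne j i with rfl | hj
    · rw [Function.update_self]
      exact lt_min (hF.1 p hpF j) hpc
    · rw [Function.update_of_ne hj]
      exact hF.1 p hpF j
  · rintro q1 hq1 q2 hq2 hne
    simp only [lowF, Finset.coe_image, Set.mem_image, Finset.mem_coe, Finset.mem_filter] at hq1 hq2
    obtain ⟨p1, ⟨hp1F, hp1c⟩, rfl⟩ := hq1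
    obtain ⟨p2, ⟨hp2F, hp2c⟩, rfl⟩ := hq2
    have hpne : p1 ≠ p2 := by rintro rfl; exact hne rfl
    refine Disjoint.mono ?_ ?_ (hF.2 hp1F hp2F hpne)
    · rw [← box_inter_halfLt]; exact inter_subset_left
    · rw [← box_inter_halfLt]; exact inter_subset_left

lemma good_highF (i : Fin n) (c : ℝ) {F : Finset (BoxP n)} (hF : Good F) :
    Good (highF i c F) := by
  constructor
  · rintro q hq j
    simp only [highF, Finset.mem_image, Finset.mem_filter] at hq
    obtain ⟨p, ⟨hpF, hpc⟩, rfl⟩ := hq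
    dsimp only
    rcases eq_or_ne j i with rfl | hj
    · rw [Function.update_self]
      exact max_lt (hF.1 p hpF j) hpc
    · rw [Function.update_of_ne hj]
      exact hF.1 p hpF j
  · rintro q1 hq1 q2 hq2 hne
    simp only [highF, Finset.coe_image, Set.mem_image, Finset.mem_coe, Finset.mem_filter] at hq1 hq2
    obtain ⟨p1, ⟨hp1F, hp1c⟩, rfl⟩ := hq1
    obtain ⟨p2, ⟨hp2F, hp2c⟩, rfl⟩ := hq2
    have hpne : p1 ≠ p2 := by rintro rfl; exact hne rfl
    refine Disjoint.mono ?_ ?_ (hF.2 hp1F hp2F hpne)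
    · rw [← box_inter_halfGe]; exact inter_subset_left
    · rw [← box_inter_halfGe]; exact inter_subset_left

lemma card_lowF_le (i : Fin n) (c : ℝ) (F : Finset (BoxP n)) :
    (lowF i c F).card ≤ F.card :=
  le_trans (Finset.card_image_le) (Finset.card_filter_le _ _)

lemma card_highF_le (i : Fin n) (c : ℝ) (F : Finset (BoxP n)) :
    (highF i c F).card ≤ F.card :=
  le_trans (Finset.card_image_le) (Finset.card_filter_le _ _)

lemma card_lowF_lt {i : Fin n} {c : ℝ} {F : Finset (BoxP n)} {q : BoxP n}
    (hq : q ∈ F) (hqc : c ≤ q.1 i) : (lowF i c F).card ≤ F.card - 1 := by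
  have hsub : F.filter (fun p => p.1 i < c) ⊆ F.erase q := by
    intro p hp
    rw [Finset.mem_filter] at hp
    refine Finset.mem_erase.2 ⟨?_, hp.1⟩
    rintro rfl
    exact absurd hp.2 (not_lt.2 hqc)
  calc (lowF i c F).card ≤ (F.filter fun p => p.1 i < c).card := Finset.card_image_le
    _ ≤ (F.erase q).card := Finset.card_le_card hsub
    _ = F.card - 1 := Finset.card_erase_of_mem hq

lemma card_highF_lt {i : Fin n} {c : ℝ} {F : Finset (BoxP n)} {q : BoxP n}
    (hq : q ∈ F) (hqc : q.2 i ≤ c) : (highF i c F).card ≤ F.card - 1 := by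
  have hsub : F.filter (fun p => c < p.2 i) ⊆ F.erase q := by
    intro p hp
    rw [Finset.mem_filter] at hp
    refine Finset.mem_erase.2 ⟨?_, hp.1⟩
    rintro rfl
    exact absurd hp.2 (not_lt.2 hqc)
  calc (highF i c F).card ≤ (F.filter fun p => c < p.2 i).card := Finset.card_image_le
    _ ≤ (F.erase q).card := Finset.card_le_card hsub
    _ = F.card - 1 := Finset.card_erase_of_mem hq

lemma lowF_nonempty {i : Fin n} {c : ℝ} {F : Finset (BoxP n)} {p : BoxP n}
    (hp : p ∈ F) (hpc : p.1 i < c) : (lowF i c F).Nonempty :=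
  ⟨_, Finset.mem_image_of_mem _ (Finset.mem_filter.2 ⟨hp, hpc⟩)⟩

lemma highF_nonempty {i : Fin n} {c : ℝ} {F : Finset (BoxP n)} {p : BoxP n}
    (hp : p ∈ F) (hpc : c < p.2 i) : (highF i c F).Nonempty :=
  ⟨_, Finset.mem_image_of_mem _ (Finset.mem_filter.2 ⟨hp, hpc⟩)⟩

lemma measurable_halfLt (i : Fin n) (c : ℝ) : MeasurableSet {x : Fin n → ℝ | x i < c} :=
  measurableSet_lt (measurable_pi_apply i) measurable_const

lemma volume_split (i : Fin n) (c : ℝ) (s : Set (Fin n → ℝ)) :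
    volume s = volume (s ∩ {x | x i < c}) + volume (s ∩ {x | c ≤ x i}) := by
  have h := measure_inter_add_diff (μ := volume) s (measurable_halfLt i c)
  have hset : s \ {x : Fin n → ℝ | x i < c} = s ∩ {x | c ≤ x i} := by
    ext x
    simp [not_lt]
  rw [← h, hset]

/-! ### Sum of two families -/

lemma toReal_ofReal_eq_max (x : ℝ) : (ENNReal.ofReal x).toReal = max x 0 := by
  rw [ENNReal.ofReal, ENNReal.coe_toReal, Real.coe_toNNReal']

lemma U_add_U {F G : Finset (BoxP n)} (hF : Good F) (hG : Good G) :
    U F + U G = ⋃ p ∈ F ×ˢ G, Box (p.1.1 + p.2.1) (p.1.2 + p.2.2) := by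
  ext x
  constructor
  · rintro ⟨u, hu, v, hv, rfl⟩
    simp only [U, mem_iUnion, exists_prop] at hu hv
    obtain ⟨p, hp, hup⟩ := hu
    obtain ⟨q, hq, hvq⟩ := hv
    have hx : u + v ∈ Box (p.1 + q.1) (p.2 + q.2) := by
      rw [← box_add_box (hF.1 p hp) (hG.1 q hq)]
      exact ⟨u, hup, v, hvq, rfl⟩
    exact mem_iUnion₂.2 ⟨(p, q), Finset.mem_product.2 ⟨hp, hq⟩, hx⟩
  · intro hx
    obtain ⟨p, hp, hxp⟩ := mem_iUnion₂.1 hx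
    rw [Finset.mem_product] at hp
    rw [← box_add_box (hF.1 p.1 hp.1) (hG.1 p.2 hp.2)] at hxp
    obtain ⟨u, hu, v, hv, rfl⟩ := hxp
    exact ⟨u, mem_iUnion₂.2 ⟨p.1, hp.1, hu⟩, v, mem_iUnion₂.2 ⟨p.2, hp.2, hv⟩, rfl⟩

lemma measurableSet_U_add_U {F G : Finset (BoxP n)} (hF : Good F) (hG : Good G) :
    MeasurableSet (U F + U G) := by
  rw [U_add_U hF hG]
  exact (F ×ˢ G).measurableSet_biUnion fun p _ => box_measurable _ _

lemma volume_U_add_U_lt_top {F G : Finset (BoxP n)} (hF : Good F) (hG : Good G) :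
    volume (U F + U G) < ⊤ := by
  rw [U_add_U hF hG]
  refine lt_of_le_of_lt (measure_biUnion_finset_le (F ×ˢ G) _) ?_
  refine ENNReal.sum_lt_top.2 fun p _ => ?_
  rw [volume_box]
  exact ENNReal.prod_lt_top fun i _ => ENNReal.ofReal_lt_top

/-! ### Separating two disjoint boxes -/

lemma exists_sep {F : Finset (BoxP n)} (hF : Good F) {p q : BoxP n} (hp : p ∈ F) (hq : q ∈ F)
    (hpq : p ≠ q) : ∃ i : Fin n, p.2 i ≤ q.1 i ∨ q.2 i ≤ p.1 i := by
  by_contra h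
  push_neg at h
  have hx : (fun i => max (p.1 i) (q.1 i)) ∈ Box p.1 p.2 ∩ Box q.1 q.2 := by
    constructor <;> rw [mem_box] <;> intro i
    · exact ⟨le_max_left _ _, max_lt (hF.1 p hp i) (h i).1⟩
    · exact ⟨le_max_right _ _, max_lt (h i).2 (hF.1 q hq i)⟩
  exact Set.disjoint_left.1 (hF.2 hp hq hpq) hx.1 hx.2

/-! ### The slice-volume function and IVT -/

noncomputable def phi (i : Fin n) (G : Finset (BoxP n)) (t : ℝ) : ℝ :=
  (volume (U G ∩ {x | x i < t})).toReal

lemma phi_eq {G : Finset (BoxP n)} (hG : Good G) (i : Fin n) (t : ℝ) :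
    phi i G t = ∑ q ∈ G, ∏ j,
      max ((if j = i then min (q.2 i) t else q.2 j) - q.1 j) 0 := by
  have hU : U G ∩ {x | x i < t} = ⋃ q ∈ G, (Box q.1 q.2 ∩ {x | x i < t}) := by
    simp only [U, iUnion_inter]
  rw [phi, hU, measure_biUnion_finset
      (hG.2.mono' fun q1 q2 h12 => h12.mono inter_subset_left inter_subset_left)
      (fun q _ => (box_measurable q.1 q.2).inter (measurable_halfLt i t)),
    ENNReal.toReal_sum (fun q _ => ?_)]
  · refine Finset.sum_congr rfl fun q _ => ?_
    rw [box_inter_halfLt, volume_box, ENNReal.toReal_prod]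
    refine Finset.prod_congr rfl fun j _ => ?_
    rw [toReal_ofReal_eq_max, Function.update_apply]
  · rw [box_inter_halfLt, volume_box]
    exact (ENNReal.prod_lt_top fun j _ => ENNReal.ofReal_lt_top).ne

lemma continuous_phi {G : Finset (BoxP n)} (hG : Good G) (i : Fin n) :
    Continuous (phi i G) := by
  have : phi i G = fun t => ∑ q ∈ G, ∏ j,
      max ((if j = i then min (q.2 i) t else q.2 j) - q.1 j) 0 := by
    funext t; exact phi_eq hG i t
  rw [this]
  refine continuous_finset_sum _ fun q _ => continuous_finset_prod _ fun j _ => ?_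
  by_cases hj : j = i
  · simp only [hj, if_pos rfl]
    exact (((continuous_const.min continuous_id).sub continuous_const).max continuous_const)
  · simp only [if_neg hj]
    exact continuous_const

lemma phi_le (i : Fin n) (G : Finset (BoxP n)) (t : ℝ) :
    phi i G t ≤ (volume (U G)).toReal :=
  ENNReal.toReal_mono (volume_U_lt_top G).ne (measure_mono inter_subset_left)

lemma phi_min {G : Finset (BoxP n)} (hne : G.Nonempty) (i : Fin n) :
    phi i G (G.inf' hne fun q => q.1 i) = 0 := by
  have : U G ∩ {x | x i < G.inf' hne fun q => q.1 i} = ∅ := by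
    rw [eq_empty_iff_forall_notMem]
    rintro x ⟨hx, hxi⟩
    simp only [U, mem_iUnion, exists_prop] at hx
    obtain ⟨q, hq, hxq⟩ := hx
    have h1 : (G.inf' hne fun q => q.1 i) ≤ q.1 i := Finset.inf'_le _ hq
    have h2 := (mem_box.1 hxq i).1
    rw [mem_setOf_eq] at hxi
    linarith
  rw [phi, this]
  simp

lemma phi_max {G : Finset (BoxP n)} (hne : G.Nonempty) (i : Fin n) :
    phi i G (G.sup' hne fun q => q.2 i) = (volume (U G)).toReal := by
  have : U G ∩ {x | x i < G.sup' hne fun q => q.2 i} = U G := by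
    refine inter_eq_left.2 fun x hx => ?_
    simp only [U, mem_iUnion, exists_prop] at hx
    obtain ⟨q, hq, hxq⟩ := hx
    have h1 : q.2 i ≤ G.sup' hne fun q => q.2 i := Finset.le_sup' (fun q : BoxP n => q.2 i) hq
    have h2 := (mem_box.1 hxq i).2
    rw [mem_setOf_eq]
    linarith
  rw [phi, this]

lemma exists_ivt {G : Finset (BoxP n)} (hG : Good G) (hne : G.Nonempty) (i : Fin n)
    {r : ℝ} (hr0 : 0 ≤ r) (hr1 : r ≤ (volume (U G)).toReal) :
    ∃ d : ℝ, phi i G d = r := by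
  set t0 := G.inf' hne fun q => q.1 i
  set t1 := G.sup' hne fun q => q.2 i
  have ht01 : t0 ≤ t1 := by
    obtain ⟨q, hq⟩ := hne
    calc t0 ≤ q.1 i := Finset.inf'_le _ hq
      _ ≤ q.2 i := (hG.1 q hq i).le
      _ ≤ t1 := Finset.le_sup' (fun q : BoxP n => q.2 i) hq
  have hsub := intermediate_value_Icc ht01 ((continuous_phi hG i).continuousOn)
  have : r ∈ Icc (phi i G t0) (phi i G t1) := by
    rw [phi_min hne i, phi_max hne i]
    exact ⟨hr0, hr1⟩
  obtain ⟨d, -, hd⟩ := hsub this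
  exact ⟨d, hd⟩

/-! ### Real volume -/

noncomputable def volR (F : Finset (BoxP n)) : ℝ := (volume (U F)).toReal

lemma volR_pos {F : Finset (BoxP n)} (hF : Good F) (hne : F.Nonempty) : 0 < volR F :=
  ENNReal.toReal_pos (volume_U_pos F hF hne).ne' (volume_U_lt_top F).ne

lemma volR_nonneg (F : Finset (BoxP n)) : 0 ≤ volR F := ENNReal.toReal_nonneg

lemma family_nonempty_of_volR_pos {F : Finset (BoxP n)} (h : 0 < volR F) : F.Nonempty := by
  rcases Finset.eq_empty_or_nonempty F with rfl | hne
  · simp [volR, U] at h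
  · exact hne

lemma volR_singleton (p : BoxP n) (hp : ∀ i, p.1 i < p.2 i) :
    volR {p} = ∏ i, (p.2 i - p.1 i) := by
  have : U ({p} : Finset (BoxP n)) = Box p.1 p.2 := by simp [U]
  rw [volR, this, volume_box, ENNReal.toReal_prod]
  exact Finset.prod_congr rfl fun i _ => ENNReal.toReal_ofReal (by linarith [hp i])

lemma volR_split (i : Fin n) (c : ℝ) {F : Finset (BoxP n)} :
    volR F = volR (lowF i c F) + volR (highF i c F) := by
  rw [volR, volR, volR, U_lowF, U_highF, volume_split i c (U F), ENNReal.toReal_add]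
  · exact (lt_of_le_of_lt (measure_mono inter_subset_left) (volume_U_lt_top F)).ne
  · exact (lt_of_le_of_lt (measure_mono inter_subset_left) (volume_U_lt_top F)).ne

/-! ### The Hadwiger–Ohmann induction -/

set_option maxHeartbeats 1000000 in
theorem HO (hn : n ≠ 0) (N : ℕ) : ∀ (F G : Finset (BoxP n)), F.card + G.card ≤ N →
    Good F → Good G → F.Nonempty → G.Nonempty →
    volR F ^ (n : ℝ)⁻¹ + volR G ^ (n : ℝ)⁻¹ ≤ (volume (U F + U G)).toReal ^ (n : ℝ)⁻¹ := by
  induction N using Nat.strong_induction_on with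
  | _ N IH =>
  -- the splitting step, assuming `2 ≤ F.card`
  have step : ∀ (F G : Finset (BoxP n)), F.card + G.card ≤ N →
      Good F → Good G → F.Nonempty → G.Nonempty → 2 ≤ F.card →
      volR F ^ (n : ℝ)⁻¹ + volR G ^ (n : ℝ)⁻¹
        ≤ (volume (U F + U G)).toReal ^ (n : ℝ)⁻¹ := by
    intro F G hcard hF hG hFne hGne h2
    obtain ⟨p0, hp0, q0, hq0, hpq0⟩ := Finset.one_lt_card.1 h2
    -- get a separating coordinate, with `p` entirely below `q` in coordinate `i`
    obtain ⟨i, p, q, hp, hq, hpq, hsep⟩ :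
        ∃ (i : Fin n) (p q : BoxP n), p ∈ F ∧ q ∈ F ∧ p ≠ q ∧ p.2 i ≤ q.1 i := by
      obtain ⟨i, h | h⟩ := exists_sep hF hp0 hq0 hpq0
      · exact ⟨i, p0, q0, hp0, hq0, hpq0, h⟩
      · exact ⟨i, q0, p0, hq0, hp0, hpq0.symm, h⟩
    set c := p.2 i with hc
    have hpc : p.1 i < c := hF.1 p hp i
    have hqc : c ≤ q.1 i := hsep
    have hqc2 : c < q.2 i := lt_of_le_of_lt hqc (hF.1 q hq i)
    -- split F
    set Fm := lowF i c F with hFm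
    set Fp := highF i c F with hFp
    have hFmne : Fm.Nonempty := lowF_nonempty hp hpc
    have hFpne : Fp.Nonempty := highF_nonempty hq hqc2
    have hFmgood : Good Fm := good_lowF i c hF
    have hFpgood : Good Fp := good_highF i c hF
    have hFmcard : Fm.card ≤ F.card - 1 := card_lowF_lt hq hqc
    have hFpcard : Fp.card ≤ F.card - 1 := card_highF_lt hp (le_refl c)
    set x := volR F with hx
    set xm := volR Fm with hxm
    set xp := volR Fp with hxp
    have hxsplit : x = xm + xp := volR_split i c
    have hxmpos : 0 < xm := volR_pos hFmgood hFmne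
    have hxppos : 0 < xp := volR_pos hFpgood hFpne
    have hxpos : 0 < x := volR_pos hF hFne
    set θ := xm / x with hθ
    have hθpos : 0 < θ := div_pos hxmpos hxpos
    have hθlt : θ < 1 := by
      rw [hθ, div_lt_one hxpos]
      linarith
    set y := volR G with hy
    have hypos : 0 < y := volR_pos hG hGne
    -- choose the splitting point for G
    obtain ⟨d, hd⟩ := exists_ivt hG hGne i (r := θ * y) (by positivity)
      (by show θ * y ≤ volR G; nlinarith)
    set Gm := lowF i d G with hGm
    set Gp := highF i d G with hGp
    have hGmgood : Good Gm := good_lowF i d hG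
    have hGpgood : Good Gp := good_highF i d hG
    have hGmvol : volR Gm = θ * y := by
      rw [volR, hGm, U_lowF]
      exact hd
    have hGsplit : y = volR Gm + volR Gp := volR_split i d
    have hGpvol : volR Gp = (1 - θ) * y := by rw [hGmvol] at hGsplit; linarith
    have hGmne : Gm.Nonempty := family_nonempty_of_volR_pos (by rw [hGmvol]; positivity)
    have hGpne : Gp.Nonempty := family_nonempty_of_volR_pos
      (by rw [hGpvol]; nlinarith)
    -- apply the induction hypothesis to the two halves
    have hcard1 : F.card - 1 + G.card < N := by
      have h1 : 1 ≤ F.card := le_trans (by norm_num) h2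
      omega
    have hIH1 := IH (F.card - 1 + G.card) hcard1 Fm Gm
      (by rw [hGm]; have := card_lowF_le i d G; omega) hFmgood hGmgood hFmne hGmne
    have hIH2 := IH (F.card - 1 + G.card) hcard1 Fp Gp
      (by rw [hGp]; have := card_highF_le i d G; omega) hFpgood hGpgood hFpne hGpne
    -- separation of the two half-sums
    set v1 := (volume (U Fm + U Gm)).toReal with hv1
    set v2 := (volume (U Fp + U Gp)).toReal with hv2
    have hv1fin : volume (U Fm + U Gm) < ⊤ := volume_U_add_U_lt_top hFmgood hGmgood
    have hv2fin : volume (U Fp + U Gp) < ⊤ := volume_U_add_U_lt_top hFpgood hGpgood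
    have hsub1 : U Fm + U Gm ⊆ (U F + U G) ∩ {w | w i < c + d} := by
      rintro w ⟨u, hu, v, hv, rfl⟩
      rw [U_lowF] at hu hv
      exact ⟨⟨u, hu.1, v, hv.1, rfl⟩, by
        have h1 := hu.2
        have h2 := hv.2
        simp only [mem_setOf_eq] at h1 h2 ⊢
        have : (u + v) i = u i + v i := rfl
        rw [this]
        linarith⟩
    have hsub2 : U Fp + U Gp ⊆ (U F + U G) ∩ {w | c + d ≤ w i} := by
      rintro w ⟨u, hu, v, hv, rfl⟩
      rw [U_highF] at hu hv
      exact ⟨⟨u, hu.1, v, hv.1, rfl⟩, by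
        have h1 := hu.2
        have h2 := hv.2
        simp only [mem_setOf_eq] at h1 h2 ⊢
        have : (u + v) i = u i + v i := rfl
        rw [this]
        linarith⟩
    set v := (volume (U F + U G)).toReal with hv
    have hvfin : volume (U F + U G) < ⊤ := volume_U_add_U_lt_top hF hG
    have hvsum : v1 + v2 ≤ v := by
      have e1 : volume (U F + U G) = volume ((U F + U G) ∩ {w | w i < c + d})
          + volume ((U F + U G) ∩ {w | c + d ≤ w i}) := volume_split i (c + d) _
      have f1 : volume ((U F + U G) ∩ {w | w i < c + d}) < ⊤ :=
        lt_of_le_of_lt (measure_mono inter_subset_left) hvfin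
      have f2 : volume ((U F + U G) ∩ {w | c + d ≤ w i}) < ⊤ :=
        lt_of_le_of_lt (measure_mono inter_subset_left) hvfin
      have g1 : v1 ≤ (volume ((U F + U G) ∩ {w | w i < c + d})).toReal :=
        ENNReal.toReal_mono f1.ne (measure_mono hsub1)
      have g2 : v2 ≤ (volume ((U F + U G) ∩ {w | c + d ≤ w i})).toReal :=
        ENNReal.toReal_mono f2.ne (measure_mono hsub2)
      have : v = (volume ((U F + U G) ∩ {w | w i < c + d})).toReal
          + (volume ((U F + U G) ∩ {w | c + d ≤ w i})).toReal := by
        rw [hv, e1, ENNReal.toReal_add f1.ne f2.ne]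
      linarith
    -- the rpow arithmetic
    set S := x ^ (n : ℝ)⁻¹ + y ^ (n : ℝ)⁻¹ with hS
    have hSpos : 0 < S := by
      have := Real.rpow_pos_of_pos hxpos ((n : ℝ)⁻¹)
      have := Real.rpow_pos_of_pos hypos ((n : ℝ)⁻¹)
      positivity
    have hxmθ : xm = θ * x := by
      rw [hθ]
      field_simp
    have hxpθ : xp = (1 - θ) * x := by
      rw [hθ]
      field_simp
      linarith
    have key1 : θ * S ^ (n : ℕ) ≤ v1 := by
      have h0 : xm ^ (n : ℝ)⁻¹ + volR Gm ^ (n : ℝ)⁻¹ ≤ v1 ^ (n : ℝ)⁻¹ := hIH1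
      have hval : xm ^ (n : ℝ)⁻¹ + volR Gm ^ (n : ℝ)⁻¹
          = θ ^ (n : ℝ)⁻¹ * S := by
        rw [hxmθ, hGmvol, Real.mul_rpow hθpos.le hxpos.le, Real.mul_rpow hθpos.le hypos.le, hS]
        ring
      have h1 : (θ ^ (n : ℝ)⁻¹ * S) ^ (n : ℕ) ≤ (v1 ^ (n : ℝ)⁻¹) ^ (n : ℕ) := by
        apply pow_le_pow_left₀ (by positivity)
        rw [← hval]
        exact h0
      have h2 : (v1 ^ (n : ℝ)⁻¹) ^ (n : ℕ) = v1 :=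
        Real.rpow_inv_natCast_pow (by rw [hv1]; exact ENNReal.toReal_nonneg) hn
      have h3 : (θ ^ (n : ℝ)⁻¹ * S) ^ (n : ℕ) = θ * S ^ (n : ℕ) := by
        rw [mul_pow, Real.rpow_inv_natCast_pow hθpos.le hn]
      rw [← h3, ← h2]
      exact h1
    have key2 : (1 - θ) * S ^ (n : ℕ) ≤ v2 := by
      have h0 : xp ^ (n : ℝ)⁻¹ + volR Gp ^ (n : ℝ)⁻¹ ≤ v2 ^ (n : ℝ)⁻¹ := hIH2
      have h1θ : (0 : ℝ) ≤ 1 - θ := by linarith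
      have hval : xp ^ (n : ℝ)⁻¹ + volR Gp ^ (n : ℝ)⁻¹
          = (1 - θ) ^ (n : ℝ)⁻¹ * S := by
        rw [hxpθ, hGpvol, Real.mul_rpow h1θ hxpos.le, Real.mul_rpow h1θ hypos.le, hS]
        ring
      have h1 : ((1 - θ) ^ (n : ℝ)⁻¹ * S) ^ (n : ℕ) ≤ (v2 ^ (n : ℝ)⁻¹) ^ (n : ℕ) := by
        apply pow_le_pow_left₀ (by positivity)
        rw [← hval]
        exact h0
      have h2 : (v2 ^ (n : ℝ)⁻¹) ^ (n : ℕ) = v2 :=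
        Real.rpow_inv_natCast_pow (by rw [hv2]; exact ENNReal.toReal_nonneg) hn
      have h3 : ((1 - θ) ^ (n : ℝ)⁻¹ * S) ^ (n : ℕ) = (1 - θ) * S ^ (n : ℕ) := by
        rw [mul_pow, Real.rpow_inv_natCast_pow h1θ hn]
      rw [← h3, ← h2]
      exact h1
    have hfinal : S ^ (n : ℕ) ≤ v := by
      calc S ^ (n : ℕ) = θ * S ^ (n : ℕ) + (1 - θ) * S ^ (n : ℕ) := by ring
        _ ≤ v1 + v2 := add_le_add key1 key2
        _ ≤ v := hvsum
    have : (S ^ (n : ℕ)) ^ (n : ℝ)⁻¹ ≤ v ^ (n : ℝ)⁻¹ :=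
      Real.rpow_le_rpow (by positivity) hfinal (by positivity)
    rwa [Real.pow_rpow_inv_natCast hSpos.le hn] at this
  -- main case analysis
  intro F G hcard hF hG hFne hGne
  by_cases h2F : 2 ≤ F.card
  · exact step F G hcard hF hG hFne hGne h2F
  by_cases h2G : 2 ≤ G.card
  · have := step G F (by omega) hG hF hGne hFne h2G
    rw [add_comm (U G) (U F)] at this
    linarith
  -- base case : two single boxes
  · have hFcard : F.card = 1 := by
      have := Finset.card_pos.2 hFne
      omega
    have hGcard : G.card = 1 := by
      have := Finset.card_pos.2 hGne
      omega
    obtain ⟨p, rfl⟩ := Finset.card_eq_one.1 hFcard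
    obtain ⟨q, rfl⟩ := Finset.card_eq_one.1 hGcard
    have hp : ∀ i, p.1 i < p.2 i := hF.1 p (Finset.mem_singleton_self p)
    have hq : ∀ i, q.1 i < q.2 i := hG.1 q (Finset.mem_singleton_self q)
    have hUp : U ({p} : Finset (BoxP n)) = Box p.1 p.2 := by simp [U]
    have hUq : U ({q} : Finset (BoxP n)) = Box q.1 q.2 := by simp [U]
    rw [volR_singleton p hp, volR_singleton q hq, hUp, hUq,
      box_add_box hp hq, volume_box, ENNReal.toReal_prod]
    have hterm : ∀ i, (ENNReal.ofReal ((p.2 + q.2) i - (p.1 + q.1) i)).toReal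
        = (p.2 i - p.1 i) + (q.2 i - q.1 i) := by
      intro i
      rw [ENNReal.toReal_ofReal (by have := hp i; have := hq i; simp [Pi.add_apply]; linarith)]
      simp [Pi.add_apply]
      ring
    rw [Finset.prod_congr rfl fun i _ => hterm i]
    exact amgm_boxes hn (fun i => by linarith [hp i]) (fun i => by linarith [hq i])

/-! ### Grid approximation of compact sets -/

lemma grid_family {A : Set (Fin n → ℝ)} (hA : IsCompact A) (hAne : A.Nonempty)
    {δ : ℝ} (hδ : 0 < δ) :
    ∃ F : Finset (BoxP n), Good F ∧ F.Nonempty ∧ A ⊆ U F ∧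
      U F ⊆ {y | ∃ a ∈ A, dist y a ≤ δ} := by
  obtain ⟨R, hR⟩ := hA.isBounded.subset_closedBall 0
  -- the index set of grid cubes meeting A
  set I : Set (Fin n → ℤ) :=
    {m | (Box (fun j => m j * δ) (fun j => m j * δ + δ) ∩ A).Nonempty} with hI
  have hIfin : I.Finite := by
    have hsub : I ⊆ Set.pi Set.univ fun _ : Fin n =>
        {m : ℤ | (m : ℝ) ∈ Icc (-(R / δ) - 1) (R / δ)} := by
      rintro m ⟨x, hxb, hxA⟩ j -
      have h1 := (mem_box.1 hxb j).1
      have h2 := (mem_box.1 hxb j).2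
      have h3 : |x j| ≤ R := by
        have := hR hxA
        rw [Metric.mem_closedBall] at this
        calc |x j| = dist (x j) ((0 : Fin n → ℝ) j) := by simp [Real.dist_eq]
          _ ≤ dist x 0 := dist_le_pi_dist x 0 j
          _ ≤ R := this
      rw [abs_le] at h3
      constructor
      · have : (m : Fin n → ℤ) j * δ ≤ x j := h1
        have h4 : (m j : ℝ) ≤ x j / δ := by
          rw [le_div_iff₀ hδ]; linarith
        have h5 : -R ≤ x j := h3.1
        have h6 : (m j : ℝ) * δ + δ > -R := by linarith
        have h7 : (m j : ℝ) > (-R - δ) / δ := by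
          rw [gt_iff_lt, div_lt_iff₀ hδ]; linarith
        have : -(R / δ) - 1 = (-R - δ) / δ := by field_simp
        rw [this]
        exact h7.le
      · have h4 : (m j : ℝ) * δ ≤ R := by linarith [h3.2]
        rw [← le_div_iff₀ hδ] at h4
        exact h4
    refine Set.Finite.subset (Set.Finite.pi fun _ => ?_) hsub
    have : {m : ℤ | (m : ℝ) ∈ Icc (-(R / δ) - 1) (R / δ)} ⊆
        Set.Icc ⌈-(R / δ) - 1⌉ ⌊R / δ⌋ := by
      rintro m ⟨h1, h2⟩
      exact ⟨Int.ceil_le.2 h1, Int.le_floor.2 h2⟩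
    exact (Set.finite_Icc _ _).subset this
  set F : Finset (BoxP n) := hIfin.toFinset.image fun m =>
    ((fun j => m j * δ), (fun j => m j * δ + δ)) with hF
  have hmemF : ∀ m : Fin n → ℤ, m ∈ I →
      ((fun j => (m j : ℝ) * δ), (fun j => (m j : ℝ) * δ + δ)) ∈ F := by
    intro m hm
    exact Finset.mem_image_of_mem _ (hIfin.mem_toFinset.2 hm)
  have hFrep : ∀ p ∈ F, ∃ m ∈ I, p = ((fun j => (m j : ℝ) * δ), fun j => (m j : ℝ) * δ + δ) := by
    intro p hp
    rw [hF, Finset.mem_image] at hp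
    obtain ⟨m, hm, rfl⟩ := hp
    exact ⟨m, hIfin.mem_toFinset.1 hm, rfl⟩
  have hcube_disj : ∀ m1 m2 : Fin n → ℤ, m1 ≠ m2 →
      Disjoint (Box (fun j => (m1 j : ℝ) * δ) (fun j => (m1 j : ℝ) * δ + δ))
        (Box (fun j => (m2 j : ℝ) * δ) (fun j => (m2 j : ℝ) * δ + δ)) := by
    intro m1 m2 hne
    rw [Set.disjoint_left]
    intro x h1 h2
    apply hne
    funext j
    have a1 := (mem_box.1 h1 j).1
    have b1 := (mem_box.1 h1 j).2
    have a2 := (mem_box.1 h2 j).1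
    have b2 := (mem_box.1 h2 j).2
    have k1 : (m1 j : ℝ) < m2 j + 1 := by
      rw [← mul_lt_mul_iff_left₀ hδ]; nlinarith
    have k2 : (m2 j : ℝ) < m1 j + 1 := by
      rw [← mul_lt_mul_iff_left₀ hδ]; nlinarith
    have k1' : m1 j < m2 j + 1 := by exact_mod_cast (by push_cast; linarith : ((m1 j : ℝ) < ((m2 j + 1 : ℤ) : ℝ)))
    have k2' : m2 j < m1 j + 1 := by exact_mod_cast (by push_cast; linarith : ((m2 j : ℝ) < ((m1 j + 1 : ℤ) : ℝ)))
    omega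
  refine ⟨F, ⟨?_, ?_⟩, ?_, ?_, ?_⟩
  · -- sides positive
    intro p hp j
    obtain ⟨m, -, rfl⟩ := hFrep p hp
    simpa using hδ
  · -- pairwise disjoint
    intro p1 hp1 p2 hp2 hne
    obtain ⟨m1, -, rfl⟩ := hFrep p1 (Finset.mem_coe.1 hp1)
    obtain ⟨m2, -, rfl⟩ := hFrep p2 (Finset.mem_coe.1 hp2)
    have hm12 : m1 ≠ m2 := by
      rintro rfl; exact hne rfl
    exact hcube_disj m1 m2 hm12
  · -- F nonempty
    obtain ⟨a, ha⟩ := hAne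
    set m : Fin n → ℤ := fun j => ⌊a j / δ⌋ with hm
    have hmem : a ∈ Box (fun j => (m j : ℝ) * δ) fun j => (m j : ℝ) * δ + δ := by
      rw [mem_box]
      intro j
      constructor
      · rw [hm]
        calc (⌊a j / δ⌋ : ℝ) * δ ≤ a j / δ * δ :=
            mul_le_mul_of_nonneg_right (Int.floor_le _) hδ.le
          _ = a j := by field_simp
      · rw [hm]
        have := Int.lt_floor_add_one (a j / δ)
        calc a j = a j / δ * δ := by field_simp
          _ < (⌊a j / δ⌋ + 1) * δ := by
            apply mul_lt_mul_of_pos_right _ hδ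
            exact this
          _ = (⌊a j / δ⌋ : ℝ) * δ + δ := by ring
    exact ⟨_, hmemF m ⟨a, hmem, ha⟩⟩
  · -- A ⊆ U F
    intro a ha
    set m : Fin n → ℤ := fun j => ⌊a j / δ⌋ with hm
    have hmem : a ∈ Box (fun j => (m j : ℝ) * δ) fun j => (m j : ℝ) * δ + δ := by
      rw [mem_box]
      intro j
      constructor
      · rw [hm]
        calc (⌊a j / δ⌋ : ℝ) * δ ≤ a j / δ * δ :=
            mul_le_mul_of_nonneg_right (Int.floor_le _) hδ.le
          _ = a j := by field_simp
      · rw [hm]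
        have := Int.lt_floor_add_one (a j / δ)
        calc a j = a j / δ * δ := by field_simp
          _ < (⌊a j / δ⌋ + 1) * δ := by
            apply mul_lt_mul_of_pos_right _ hδ
            exact this
          _ = (⌊a j / δ⌋ : ℝ) * δ + δ := by ring
    exact mem_iUnion₂.2 ⟨_, hmemF m ⟨a, hmem, ha⟩, hmem⟩
  · -- U F is δ-close to A
    intro y hy
    obtain ⟨p, hp, hyp⟩ := mem_iUnion₂.1 hy
    obtain ⟨m, hmI, rfl⟩ := hFrep p hp
    obtain ⟨a, hab, haA⟩ := hmI
    refine ⟨a, haA, ?_⟩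
    rw [dist_pi_le_iff hδ.le]
    intro j
    have h1 := (mem_box.1 hyp j).1
    have h2 := (mem_box.1 hyp j).2
    have h3 := (mem_box.1 hab j).1
    have h4 := (mem_box.1 hab j).2
    rw [Real.dist_eq, abs_le]
    constructor <;> [skip; skip] <;> simp only at h1 h2 h3 h4 <;> linarith

/-! ### Brunn–Minkowski for compact sets in `Fin n → ℝ` -/

theorem BM_compact (hn : n ≠ 0) {A B : Set (Fin n → ℝ)} (hA : IsCompact A) (hB : IsCompact B)
    (hAne : A.Nonempty) (hBne : B.Nonempty) :
    (volume A).toReal ^ (n : ℝ)⁻¹ + (volume B).toReal ^ (n : ℝ)⁻¹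
      ≤ (volume (A + B)).toReal ^ (n : ℝ)⁻¹ := by
  have hAB : IsCompact (A + B) := hA.add hB
  set L : ℝ := (volume A).toReal ^ (n : ℝ)⁻¹ + (volume B).toReal ^ (n : ℝ)⁻¹ with hL
  have hL0 : 0 ≤ L := by positivity
  suffices hpow : L ^ (n : ℕ) ≤ (volume (A + B)).toReal by
    have h1 : (L ^ (n : ℕ)) ^ (n : ℝ)⁻¹ ≤ (volume (A + B)).toReal ^ (n : ℝ)⁻¹ :=
      Real.rpow_le_rpow (by positivity) hpow (by positivity)
    rwa [Real.pow_rpow_inv_natCast hL0 hn] at h1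
  refine le_of_forall_pos_le_add fun ε hε => ?_
  -- outer approximation of A + B by an open set
  have hABfin : volume (A + B) < ⊤ := hAB.measure_lt_top
  have hlt : volume (A + B) < volume (A + B) + ENNReal.ofReal ε :=
    ENNReal.lt_add_right hABfin.ne (by simpa using hε)
  obtain ⟨W, hWsub, hWopen, hWvol⟩ := Set.exists_isOpen_lt_of_lt (A + B) _ hlt
  obtain ⟨δ₀, hδ₀pos, hδ₀⟩ := hAB.exists_cthickening_subset_open hWopen hWsub
  set δ : ℝ := δ₀ / 2 with hδdef
  have hδpos : 0 < δ := by positivity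
  obtain ⟨F, hFgood, hFne, hAF, hFA⟩ := grid_family hA hAne hδpos
  obtain ⟨G, hGgood, hGne, hBG, hGB⟩ := grid_family hB hBne hδpos
  -- U F + U G is inside W
  have hsum_sub : U F + U G ⊆ W := by
    rintro w ⟨u, hu, v, hv, rfl⟩
    obtain ⟨a, haA, hua⟩ := hFA hu
    obtain ⟨b, hbB, hvb⟩ := hGB hv
    refine hδ₀ ?_
    refine Metric.mem_cthickening_of_dist_le (u + v) (a + b) δ₀ _ ⟨a, haA, b, hbB, rfl⟩ ?_
    calc dist (u + v) (a + b) ≤ dist u a + dist v b := dist_add_add_le u v a b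
      _ ≤ δ + δ := add_le_add hua hvb
      _ = δ₀ := by rw [hδdef]; ring
  -- chain of inequalities
  have hHO := HO hn (F.card + G.card) F G (le_refl _) hFgood hGgood hFne hGne
  have hvolA : (volume A).toReal ≤ volR F :=
    ENNReal.toReal_mono (volume_U_lt_top F).ne (measure_mono hAF)
  have hvolB : (volume B).toReal ≤ volR G :=
    ENNReal.toReal_mono (volume_U_lt_top G).ne (measure_mono hBG)
  have hstep1 : L ≤ volR F ^ (n : ℝ)⁻¹ + volR G ^ (n : ℝ)⁻¹ := by
    refine add_le_add ?_ ?_ <;>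
      exact Real.rpow_le_rpow ENNReal.toReal_nonneg (by assumption) (by positivity)
  have hWfin : volume W < ⊤ := lt_trans hWvol
    (by exact ENNReal.add_lt_top.2 ⟨hABfin, ENNReal.ofReal_lt_top⟩)
  have hstep2 : (volume (U F + U G)).toReal ≤ (volume W).toReal :=
    ENNReal.toReal_mono hWfin.ne (measure_mono hsum_sub)
  have hstep3 : (volume W).toReal ≤ (volume (A + B)).toReal + ε := by
    have := (ENNReal.toReal_le_toReal hWfin.ne
      (by exact (ENNReal.add_lt_top.2 ⟨hABfin, ENNReal.ofReal_lt_top⟩).ne)).2 hWvol.le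
    rwa [ENNReal.toReal_add hABfin.ne ENNReal.ofReal_ne_top,
      ENNReal.toReal_ofReal hε.le] at this
  calc L ^ (n : ℕ) ≤ (volR F ^ (n : ℝ)⁻¹ + volR G ^ (n : ℝ)⁻¹) ^ (n : ℕ) :=
        pow_le_pow_left₀ hL0 hstep1 _
    _ ≤ ((volume (U F + U G)).toReal ^ (n : ℝ)⁻¹) ^ (n : ℕ) := by
        apply pow_le_pow_left₀ (add_nonneg (Real.rpow_nonneg (volR_nonneg F) _) (Real.rpow_nonneg (volR_nonneg G) _)) hHO
    _ = (volume (U F + U G)).toReal :=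
        Real.rpow_inv_natCast_pow ENNReal.toReal_nonneg hn
    _ ≤ (volume W).toReal := hstep2
    _ ≤ (volume (A + B)).toReal + ε := hstep3

/-! ### Transfer to `EuclideanSpace` -/

open scoped ENNReal

lemma volume_image_equiv (S : Set (EuclideanSpace ℝ (Fin n))) (hS : MeasurableSet S) :
    volume (WithLp.equiv 2 (Fin n → ℝ) '' S) = volume S := by
  rw [show (WithLp.equiv 2 (Fin n → ℝ) : _ → _) = (MeasurableEquiv.toLp 2 (Fin n → ℝ)).symm from rfl,
    (MeasurableEquiv.toLp 2 (Fin n → ℝ)).symm.image_eq_preimage_symm]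
  exact ((EuclideanSpace.volume_preserving_symm_measurableEquiv_toLp (Fin n)).symm
    (MeasurableEquiv.toLp 2 (Fin n → ℝ)).symm).measure_preimage hS.nullMeasurableSet

theorem BM_euclidean (hn : n ≠ 0) {A B : Set (EuclideanSpace ℝ (Fin n))}
    (hA : IsCompact A) (hB : IsCompact B) (hAne : A.Nonempty) (hBne : B.Nonempty) :
    (volume A).toReal ^ (n : ℝ)⁻¹ + (volume B).toReal ^ (n : ℝ)⁻¹
      ≤ (volume (A + B)).toReal ^ (n : ℝ)⁻¹ := by
  set e := WithLp.equiv 2 (Fin n → ℝ) with he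
  have hcont : Continuous e := PiLp.continuous_ofLp _ _
  have hA' : IsCompact (e '' A) := hA.image hcont
  have hB' : IsCompact (e '' B) := hB.image hcont
  have hAne' : (e '' A).Nonempty := hAne.image _
  have hBne' : (e '' B).Nonempty := hBne.image _
  have hadd : e '' (A + B) = e '' A + e '' B := by
    ext w
    constructor
    · rintro ⟨w', ⟨u, hu, v, hv, rfl⟩, rfl⟩
      exact ⟨e u, mem_image_of_mem _ hu, e v, mem_image_of_mem _ hv, rfl⟩
    · rintro ⟨u', ⟨u, hu, rfl⟩, v', ⟨v, hv, rfl⟩, rfl⟩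
      exact ⟨u + v, ⟨u, hu, v, hv, rfl⟩, rfl⟩
  have h1 := BM_compact hn hA' hB' hAne' hBne'
  rw [volume_image_equiv A hA.measurableSet, volume_image_equiv B hB.measurableSet,
    ← hadd, volume_image_equiv (A + B) (hA.add hB).measurableSet] at h1
  exact h1

end BM15

open BM15 in
/-- For origin-symmetric compact convex bodies `K, L` in `ℝⁿ`, the volume of `K ∩ (z + L)`
is maximised at `z = 0`: `vol(K ∩ (z + L)) ≤ vol(K ∩ L)` for every `z`. -/
theorem statement15 (n : ℕ) (K L : Set (EuclideanSpace ℝ (Fin n)))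
    (hKc : IsCompact K) (hLc : IsCompact L)
    (hKconv : Convex ℝ K) (hLconv : Convex ℝ L)
    (hKne : K.Nonempty) (hLne : L.Nonempty)
    (hKs : K = -K) (hLs : L = -L) (z : EuclideanSpace ℝ (Fin n)) :
    volume (K ∩ ((fun x => z + x) '' L)) ≤ volume (K ∩ L) := by
  rcases Nat.eq_zero_or_pos n with rfl | hnpos
  · -- dimension 0 : the translation is the identity
    haveI : Subsingleton (EuclideanSpace ℝ (Fin 0)) :=
      ⟨fun a b => by ext i; exact i.elim0⟩
    have hz : (fun x : EuclideanSpace ℝ (Fin 0) => z + x) = id := by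
      funext x
      exact Subsingleton.elim _ _
    rw [hz, Set.image_id]
  have hn : n ≠ 0 := hnpos.ne'
  set A := K ∩ ((fun x => z + x) '' L) with hA
  rcases Set.eq_empty_or_nonempty A with hAe | hAne
  · rw [hAe]
    simp
  -- A is a compact convex set
  have hLt_compact : IsCompact ((fun x => z + x) '' L) :=
    hLc.image (continuous_const.add continuous_id)
  have hAc : IsCompact A := hKc.inter_right hLt_compact.isClosed
  -- the two halves
  set A' := (2⁻¹ : ℝ) • A with hA'
  set B' := (2⁻¹ : ℝ) • (-A) with hB'
  have hA'c : IsCompact A' := hAc.smul _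
  have hB'c : IsCompact B' := hAc.neg.smul _
  have hA'ne : A'.Nonempty := Set.smul_set_nonempty.2 hAne
  have hB'ne : B'.Nonempty := Set.smul_set_nonempty.2 (Set.nonempty_neg.2 hAne)
  -- the midpoint set is inside K ∩ L
  have hsub : A' + B' ⊆ K ∩ L := by
    rintro w ⟨u, ⟨xa, hxa, rfl⟩, v, ⟨xb, hxb, rfl⟩, rfl⟩
    have hxbA : -xb ∈ A := Set.mem_neg.1 hxb
    constructor
    · -- membership in K
      have h1 : xa ∈ K := hxa.1
      have h2 : xb ∈ K := by
        rw [hKs, Set.mem_neg]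
        exact hxbA.1
      exact hKconv h1 h2 (by norm_num) (by norm_num) (by norm_num)
    · -- membership in L
      obtain ⟨la, hla, hxa2⟩ := hxa.2
      obtain ⟨lb, hlb, hxb2⟩ := hxbA.2
      have hlb' : -lb ∈ L := by
        rw [hLs, Set.mem_neg, neg_neg]
        exact hlb
      have heq : (2⁻¹ : ℝ) • xa + (2⁻¹ : ℝ) • xb = (2⁻¹ : ℝ) • la + (2⁻¹ : ℝ) • (-lb) := by
        have h3 : xa = z + la := hxa2.symm
        have hxb2' : z + lb = -xb := hxb2
        have h4 : xb = -(z + lb) := by rw [hxb2', neg_neg]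
        rw [h3, h4]
        module
      show (2⁻¹ : ℝ) • xa + (2⁻¹ : ℝ) • xb ∈ L
      rw [heq]
      exact hLconv hla hlb' (by norm_num) (by norm_num) (by norm_num)
  -- volumes
  have hμA : volume A ≠ ⊤ := hAc.measure_lt_top.ne
  have hμKL : volume (K ∩ L) ≠ ⊤ := (hKc.inter_right hLc.isClosed).measure_lt_top.ne
  set x := (volume A).toReal with hx
  have hsmul : ∀ S : Set (EuclideanSpace ℝ (Fin n)),
      volume ((2⁻¹ : ℝ) • S) = ENNReal.ofReal ((2⁻¹ : ℝ) ^ n) * volume S := by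
    intro S
    rw [Measure.addHaar_smul volume (2⁻¹ : ℝ) S]
    congr 2
    rw [finrank_euclideanSpace_fin]
    exact abs_of_pos (by positivity)
  have hvolA' : (volume A').toReal = (2⁻¹ : ℝ) ^ n * x := by
    rw [hA', hsmul A, ENNReal.toReal_mul, ENNReal.toReal_ofReal (by positivity)]
  have hvolB' : (volume B').toReal = (2⁻¹ : ℝ) ^ n * x := by
    rw [hB', hsmul (-A), ENNReal.toReal_mul, ENNReal.toReal_ofReal (by positivity),
      Measure.measure_neg volume A]
  -- Brunn–Minkowski
  have hBM := BM_euclidean hn hA'c hB'c hA'ne hB'ne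
  rw [hvolA', hvolB'] at hBM
  have hx0 : 0 ≤ x := ENNReal.toReal_nonneg
  have hhalf : ((2⁻¹ : ℝ) ^ n * x) ^ (n : ℝ)⁻¹ = 2⁻¹ * x ^ (n : ℝ)⁻¹ := by
    rw [Real.mul_rpow (by positivity) hx0, Real.pow_rpow_inv_natCast (by norm_num) hn]
  rw [hhalf] at hBM
  have hBM2 : x ^ (n : ℝ)⁻¹ ≤ (volume (A' + B')).toReal ^ (n : ℝ)⁻¹ := by linarith
  have hxle : x ≤ (volume (A' + B')).toReal := by
    have h1 : (x ^ (n : ℝ)⁻¹) ^ (n : ℕ) ≤ ((volume (A' + B')).toReal ^ (n : ℝ)⁻¹) ^ (n : ℕ) :=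
      pow_le_pow_left₀ (by positivity) hBM2 _
    rwa [Real.rpow_inv_natCast_pow hx0 hn,
      Real.rpow_inv_natCast_pow ENNReal.toReal_nonneg hn] at h1
  have hfin : x ≤ (volume (K ∩ L)).toReal :=
    le_trans hxle (ENNReal.toReal_mono hμKL (measure_mono hsub))
  exact (ENNReal.toReal_le_toReal hμA hμKL).1 hfin
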